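/- Suppose {Π_j^A}_{j=1}^{m_A} and {Π_j^B}_{j=1}^{m_B} are tight rank-one IC-POVMs on ℂ^{D_A} and ℂ^{D_B} with D_A, D_B ≥ 2. Then the product POVM {Π_j^A ⊗ Π_k^B}_{j,k}, with m = m_A m_B outcomes, is an IC-POVM on ℂ^{D_A D_B} but it is not a tight IC-POVM; i.e., the tight reconstruction formula ρ = (m(D_AD_B+1)/(D_AD_B)) Σ p_{jk} Π_j^A⊗Π_k^B − I fails for some density matrix ρ. -/

import Mathlib

open Matrix BigOperators Finset Kronecker
open scoped ComplexOrder

noncomputable section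

/-- The rank-one projector `|v⟩⟨v|`. -/
def proj {n : Type*} [Fintype n] (v : n → ℂ) : Matrix n n ℂ :=
  Matrix.of fun a b => v a * star (v b)

/-- The inner product `⟨v|w⟩` on `n → ℂ`. -/
def inner' {n : Type*} [Fintype n] (v w : n → ℂ) : ℂ := ∑ i, star (v i) * w i

/-- A density matrix: positive semidefinite with unit trace. -/
def IsDensity {n : Type*} [Fintype n] [DecidableEq n] (ρ : Matrix n n ℂ) : Prop :=
  ρ.PosSemidef ∧ ρ.trace = 1


lemma proj_posSemidef {n : Type*} [Fintype n] [DecidableEq n] (v : n → ℂ) :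
    (proj v).PosSemidef := by
  rw [Matrix.posSemidef_iff_dotProduct_mulVec]
  constructor
  · ext a b
    simp [proj, Matrix.conjTranspose_apply, mul_comm]
  · intro x
    have h1 : star x ⬝ᵥ (proj v *ᵥ x)
        = star (∑ i, star (v i) * x i) * (∑ i, star (v i) * x i) := by
      simp only [dotProduct, Matrix.mulVec, proj, Matrix.of_apply, star_sum, star_mul',
        star_star, Pi.star_apply]
      rw [Finset.sum_mul_sum]
      apply Finset.sum_congr rfl
      intro a _
      rw [Finset.mul_sum]
      apply Finset.sum_congr rfl
      intro b _
      ring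
    rw [h1]
    exact star_mul_self_nonneg _

lemma trace_proj {n : Type*} [Fintype n] [DecidableEq n] (v : n → ℂ) :
    (proj v).trace = inner' v v := by
  simp [Matrix.trace, proj, inner', Matrix.diag, mul_comm]

lemma inner'_single {n : Type*} [Fintype n] [DecidableEq n] (a b : n) (c d : ℂ) :
    inner' (Pi.single a c) (Pi.single b d) = if a = b then star c * d else 0 := by
  simp only [inner', Pi.single_apply]
  rw [Finset.sum_eq_single a]
  · simp [eq_comm]
  · intro i _ hi
    simp [hi]
  · simp

lemma proj_single {n : Type*} [Fintype n] [DecidableEq n] (a : n) :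
    proj (Pi.single a (1:ℂ)) = Matrix.single a a 1 := by
  ext i j
  by_cases h1 : i = a <;> by_cases h2 : j = a <;>
    simp [proj, Pi.single_apply, Matrix.single, h1, h2, eq_comm] <;> split_ifs <;> simp_all

lemma smul_proj_posSemidef {n : Type*} [Fintype n] [DecidableEq n] (r : ℝ) (hr : 0 ≤ r)
    (v : n → ℂ) : (((r:ℂ)) • proj v).PosSemidef := by
  have h := proj_posSemidef (n := n) v
  rw [Matrix.posSemidef_iff_dotProduct_mulVec]
  constructor
  · show _ = _
    rw [Matrix.conjTranspose_smul, h.1.eq]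
    simp [Complex.star_def, Complex.conj_ofReal]
  · intro x
    rw [Matrix.smul_mulVec, dotProduct_smul]
    have := h.dotProduct_mulVec_nonneg x
    rw [smul_eq_mul]
    exact mul_nonneg (by exact_mod_cast Complex.zero_le_real.mpr hr) this

lemma half_density {n : Type*} [Fintype n] [DecidableEq n] (v : n → ℂ)
    (hv : inner' v v = 2) : IsDensity ((1/2 : ℂ) • proj v) := by
  have hc : ((1/2 : ℝ) : ℂ) = (1/2 : ℂ) := by norm_num
  constructor
  · rw [← hc]; exact smul_proj_posSemidef _ (by norm_num) _
  · rw [Matrix.trace_smul, trace_proj, hv, smul_eq_mul]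
    norm_num

lemma frame_id {n : Type*} [Fintype n] [DecidableEq n] {m : ℕ} (c : ℂ)
    (P : Fin m → Matrix n n ℂ)
    (h : ∀ ρ : Matrix n n ℂ, IsDensity ρ → c • ∑ j, (ρ * P j).trace • P j = ρ + 1)
    (X : Matrix n n ℂ) :
    c • ∑ j, (X * P j).trace • P j = X + X.trace • 1 := by
  set T : Matrix n n ℂ →ₗ[ℂ] Matrix n n ℂ :=
    { toFun := fun X => c • ∑ j, (X * P j).trace • P j - X - X.trace • (1 : Matrix n n ℂ)
      map_add' := by
        intro X Y
        simp only [add_mul, Matrix.trace_add, add_smul, Finset.sum_add_distrib, smul_add]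
        abel
      map_smul' := by
        intro r X
        simp only [Matrix.smul_mul, Matrix.trace_smul, smul_eq_mul, RingHom.id_apply,
          smul_sub, mul_smul, Finset.smul_sum, smul_comm r c]
        try abel } with hT
  have hdens : ∀ ρ : Matrix n n ℂ, IsDensity ρ → T ρ = 0 := by
    intro ρ hρ
    have h2 := h ρ hρ
    simp only [hT, LinearMap.coe_mk, AddHom.coe_mk, h2, hρ.2, one_smul]
    abel
  have hTE : ∀ a b : n, T (Matrix.single a b (1:ℂ)) = 0 := by
    intro a b
    by_cases hab : a = b
    · subst hab
      apply hdens
      rw [← proj_single]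
      exact ⟨proj_posSemidef _, by rw [trace_proj, inner'_single]; simp⟩
    · have hmix : ∀ (d : ℂ), star d * d = 1 →
          inner' (Pi.single a 1 + Pi.single b d) (Pi.single a 1 + Pi.single b d) = 2 := by
        intro d hd
        simp only [inner', Pi.add_apply, star_add, add_mul, mul_add, Finset.sum_add_distrib]
        have e1 := inner'_single (n := n) a a (1:ℂ) 1
        have e2 := inner'_single (n := n) a b (1:ℂ) d
        have e3 := inner'_single (n := n) b a d 1
        have e4 := inner'_single (n := n) b b d d
        simp only [inner'] at e1 e2 e3 e4
        rw [e1, e2, e3, e4, hd]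
        simp [hab, Ne.symm hab]
        try norm_num
      have hdu : IsDensity ((1/2:ℂ) • proj (Pi.single a 1 + Pi.single b 1)) :=
        half_density _ (hmix 1 (by simp))
      have hdw : IsDensity ((1/2:ℂ) • proj (Pi.single a 1 + Pi.single b Complex.I)) :=
        half_density _ (hmix Complex.I (by simp))
      have hda : IsDensity (proj (Pi.single a (1:ℂ))) :=
        ⟨proj_posSemidef _, by rw [trace_proj, inner'_single]; simp⟩
      have hdb : IsDensity (proj (Pi.single b (1:ℂ))) :=
        ⟨proj_posSemidef _, by rw [trace_proj, inner'_single]; simp⟩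
      have hE : Matrix.single a b (1:ℂ)
          = ((1/2:ℂ) • proj (Pi.single a 1 + Pi.single b 1))
            + Complex.I • ((1/2:ℂ) • proj (Pi.single a 1 + Pi.single b Complex.I))
            - ((1+Complex.I)/2) • proj (Pi.single a (1:ℂ))
            - ((1+Complex.I)/2) • proj (Pi.single b (1:ℂ)) := by
        ext i j
        simp only [Matrix.sub_apply, Matrix.add_apply, Matrix.smul_apply, proj,
          Matrix.of_apply, Pi.add_apply, Pi.single_apply, smul_eq_mul, Matrix.single]
        by_cases h1 : i = a <;> by_cases h2 : i = b <;>
          by_cases h3 : j = a <;> by_cases h4 : j = b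
        all_goals try exact absurd (h1.symm.trans h2) hab
        all_goals try exact absurd (h3.symm.trans h4) hab
        all_goals try simp only [h1, h2, h3, h4, if_true, if_false, ite_true, ite_false,
          if_neg, eq_self_iff_true, and_true, true_and, and_false, false_and,
          star_add, star_one, star_zero, Complex.star_def, Complex.conj_I,
          _root_.map_one, _root_.map_zero]
        all_goals try simp_all only [if_true, if_false, ite_true, ite_false, ite_eq_right_iff,
          eq_self_iff_true, not_false_iff, and_true, true_and, and_false, false_and,
          if_neg, if_pos]
        all_goals try simp_all [Complex.ext_iff, Ne.symm hab]
        all_goals try grind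
        all_goals norm_num
      rw [hE]
      simp only [map_add, map_sub, LinearMap.map_smul, hdens _ hdu, hdens _ hdw,
        hdens _ hda, hdens _ hdb, smul_zero, add_zero, sub_zero, zero_add]
  have hTX : T X = 0 := by
    rw [matrix_eq_sum_single X, map_sum]
    refine Finset.sum_eq_zero fun a _ => ?_
    rw [map_sum]
    refine Finset.sum_eq_zero fun b _ => ?_
    have hs : Matrix.single a b (X a b) = X a b • Matrix.single a b (1:ℂ) := by
      rw [Matrix.smul_single]; simp
    rw [hs, LinearMap.map_smul, hTE a b, smul_zero]
  have hfin : c • ∑ j, (X * P j).trace • P j - X - X.trace • (1 : Matrix n n ℂ) = 0 := hTX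
  rw [sub_sub, sub_eq_zero] at hfin
  exact hfin

lemma sum_kron_left {I : Type*} {nA nB mA' mB' : Type*} [Fintype nA] [Fintype nB]
    (s : Finset I) (f : I → Matrix nA mA' ℂ) (B : Matrix nB mB' ℂ) :
    (∑ i ∈ s, f i) ⊗ₖ B = ∑ i ∈ s, f i ⊗ₖ B := by
  ext ⟨i1, i2⟩ ⟨j1, j2⟩
  simp [Matrix.kroneckerMap_apply, Matrix.sum_apply, Finset.sum_mul]

lemma sum_kron_right {I : Type*} {nA nB mA' mB' : Type*} [Fintype nA] [Fintype nB]
    (s : Finset I) (A : Matrix nA mA' ℂ) (f : I → Matrix nB mB' ℂ) :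
    A ⊗ₖ (∑ i ∈ s, f i) = ∑ i ∈ s, A ⊗ₖ f i := by
  ext ⟨i1, i2⟩ ⟨j1, j2⟩
  simp [Matrix.kroneckerMap_apply, Matrix.sum_apply, Finset.mul_sum]

lemma kron_stdBasis {nA nB : Type*} [Fintype nA] [Fintype nB] [DecidableEq nA] [DecidableEq nB]
    (r p : nA) (s q : nB) :
    Matrix.single r p (1:ℂ) ⊗ₖ Matrix.single s q (1:ℂ) = Matrix.single (r,s) (p,q) 1 := by
  ext ⟨i1, i2⟩ ⟨j1, j2⟩
  simp only [Matrix.kroneckerMap_apply, Matrix.single, Matrix.of_apply, Prod.mk.injEq]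
  split_ifs <;> simp_all <;> tauto

lemma trace_mul_std {n : Type*} [Fintype n] [DecidableEq n] (Δ : Matrix n n ℂ) (u v : n) :
    (Δ * Matrix.single u v 1).trace = Δ v u := by
  simp [Matrix.trace, Matrix.diag, Matrix.mul_apply, Matrix.single, ite_and,
    mul_ite, mul_one, mul_zero]

lemma smul_sum_kron_left {nA nB : Type*} [Fintype nA] [Fintype nB] {m : ℕ} (c : ℂ)
    (t : Fin m → ℂ) (P : Fin m → Matrix nA nA ℂ) (B : Matrix nB nB ℂ) :
    (c • ∑ j, t j • P j) ⊗ₖ B = c • ∑ j, t j • (P j ⊗ₖ B) := by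
  rw [Matrix.smul_kronecker, sum_kron_left]
  simp [Matrix.smul_kronecker]

lemma smul_sum_kron_right {nA nB : Type*} [Fintype nA] [Fintype nB] {m : ℕ} (c : ℂ)
    (t : Fin m → ℂ) (A : Matrix nA nA ℂ) (P : Fin m → Matrix nB nB ℂ) :
    A ⊗ₖ (c • ∑ j, t j • P j) = c • ∑ j, t j • (A ⊗ₖ P j) := by
  rw [Matrix.kronecker_smul, sum_kron_right]
  simp [Matrix.kronecker_smul]

lemma trace_mul_smul_sum_zero {n' : Type*} [Fintype n'] {m : ℕ} (Δ : Matrix n' n' ℂ) (c : ℂ)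
    (t : Fin m → ℂ) (M : Fin m → Matrix n' n' ℂ) (h : ∀ j, (Δ * M j).trace = 0) :
    (Δ * (c • ∑ j, t j • M j)).trace = 0 := by
  rw [Matrix.mul_smul, Matrix.trace_smul, Matrix.mul_sum, Matrix.trace_sum]
  have : ∀ j ∈ Finset.univ, (Δ * (t j • M j)).trace = 0 := fun j _ => by
    rw [Matrix.mul_smul, Matrix.trace_smul, h j, smul_zero]
  rw [Finset.sum_congr rfl this, Finset.sum_const_zero, smul_zero]

/-- Proposition 2 (product POVMs): the tensor product of two tight rank-one IC-POVMs is
informationally complete but is not a tight IC-POVM. -/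
theorem stmt_2 (DA DB mA mB : ℕ) (hDA : 2 ≤ DA) (hDB : 2 ≤ DB) (hmA : 0 < mA) (hmB : 0 < mB)
    (φA : Fin mA → Fin DA → ℂ) (φB : Fin mB → Fin DB → ℂ)
    (hA1 : ∀ j, inner' (φA j) (φA j) = 1) (hB1 : ∀ k, inner' (φB k) (φB k) = 1)
    (PA : Fin mA → Matrix (Fin DA) (Fin DA) ℂ) (PB : Fin mB → Matrix (Fin DB) (Fin DB) ℂ)
    (hPA : ∀ j, PA j = ((DA : ℂ)/(mA : ℂ)) • proj (φA j))
    (hPB : ∀ k, PB k = ((DB : ℂ)/(mB : ℂ)) • proj (φB k))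
    (hsumA : ∑ j, PA j = 1) (hsumB : ∑ k, PB k = 1)
    (htightA : ∀ ρ : Matrix (Fin DA) (Fin DA) ℂ, IsDensity ρ →
      ρ = (((mA : ℂ) * ((DA : ℂ) + 1))/(DA : ℂ)) • ∑ j, (ρ * PA j).trace • PA j - 1)
    (htightB : ∀ ρ : Matrix (Fin DB) (Fin DB) ℂ, IsDensity ρ →
      ρ = (((mB : ℂ) * ((DB : ℂ) + 1))/(DB : ℂ)) • ∑ k, (ρ * PB k).trace • PB k - 1) :
    -- the product POVM is informationally complete …
    (∀ ρ σ : Matrix (Fin DA × Fin DB) (Fin DA × Fin DB) ℂ, IsDensity ρ → IsDensity σ →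
      (∀ j k, (ρ * (PA j ⊗ₖ PB k)).trace = (σ * (PA j ⊗ₖ PB k)).trace) → ρ = σ)
    -- … but the tight reconstruction formula fails for some density matrix
    ∧ ¬ (∀ ρ : Matrix (Fin DA × Fin DB) (Fin DA × Fin DB) ℂ, IsDensity ρ →
      ρ = (((mA : ℂ) * (mB : ℂ) * ((DA : ℂ) * (DB : ℂ) + 1))/((DA : ℂ) * (DB : ℂ))) •
            ∑ j, ∑ k, (ρ * (PA j ⊗ₖ PB k)).trace • (PA j ⊗ₖ PB k) - 1) := by
  have hDA0 : (DA : ℂ) ≠ 0 := Nat.cast_ne_zero.mpr (by omega)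
  have hDB0 : (DB : ℂ) ≠ 0 := Nat.cast_ne_zero.mpr (by omega)
  have hmA0 : (mA : ℂ) ≠ 0 := Nat.cast_ne_zero.mpr (by omega)
  have hmB0 : (mB : ℂ) ≠ 0 := Nat.cast_ne_zero.mpr (by omega)
  set cA : ℂ := ((mA : ℂ) * ((DA : ℂ) + 1))/(DA : ℂ) with hcA
  set cB : ℂ := ((mB : ℂ) * ((DB : ℂ) + 1))/(DB : ℂ) with hcB
  have hDA1 : ((DA : ℂ) + 1) ≠ 0 := by
    have : ((DA : ℂ) + 1) = ((DA + 1 : ℕ) : ℂ) := by push_cast; ring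
    rw [this]; exact Nat.cast_ne_zero.mpr (by omega)
  have hDB1 : ((DB : ℂ) + 1) ≠ 0 := by
    have : ((DB : ℂ) + 1) = ((DB + 1 : ℕ) : ℂ) := by push_cast; ring
    rw [this]; exact Nat.cast_ne_zero.mpr (by omega)
  have hcA0 : cA ≠ 0 := by
    rw [hcA]; exact div_ne_zero (mul_ne_zero hmA0 hDA1) hDA0
  have hcB0 : cB ≠ 0 := by
    rw [hcB]; exact div_ne_zero (mul_ne_zero hmB0 hDB1) hDB0
  have hA' : ∀ ρ : Matrix (Fin DA) (Fin DA) ℂ, IsDensity ρ →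
      cA • ∑ j, (ρ * PA j).trace • PA j = ρ + 1 := fun ρ hρ =>
    (eq_sub_iff_add_eq.mp (htightA ρ hρ)).symm
  have hB' : ∀ ρ : Matrix (Fin DB) (Fin DB) ℂ, IsDensity ρ →
      cB • ∑ k, (ρ * PB k).trace • PB k = ρ + 1 := fun ρ hρ =>
    (eq_sub_iff_add_eq.mp (htightB ρ hρ)).symm
  have keyA := frame_id cA PA hA'
  have keyB := frame_id cB PB hB'
  constructor
  · -- informational completeness
    intro ρ σ hρ hσ heq
    have hφ : ∀ j k, ((ρ - σ) * (PA j ⊗ₖ PB k)).trace = 0 := by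
      intro j k
      rw [Matrix.sub_mul, Matrix.trace_sub, heq j k, sub_self]
    set Δ := ρ - σ with hΔ
    have step1 : ∀ (X : Matrix (Fin DA) (Fin DA) ℂ) k,
        (Δ * ((X + X.trace • 1) ⊗ₖ PB k)).trace = 0 := by
      intro X k
      rw [← keyA X, smul_sum_kron_left]
      exact trace_mul_smul_sum_zero Δ cA _ _ (fun j => hφ j k)
    have step2 : ∀ k, (Δ * ((1 : Matrix (Fin DA) (Fin DA) ℂ) ⊗ₖ PB k)).trace = 0 := by
      intro k
      have h1 := step1 1 k
      have h2 : ((1 : Matrix (Fin DA) (Fin DA) ℂ) + (1 : Matrix (Fin DA) (Fin DA) ℂ).trace • 1)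
          = (1 + (DA : ℂ)) • 1 := by
        rw [Matrix.trace_one]
        simp [add_smul]
      rw [h2, Matrix.smul_kronecker, Matrix.mul_smul, Matrix.trace_smul, smul_eq_mul] at h1
      have h3 : (1 + (DA : ℂ)) ≠ 0 := by
        rw [add_comm]; exact hDA1
      exact (mul_eq_zero.mp h1).resolve_left h3
    have step3 : ∀ (X : Matrix (Fin DA) (Fin DA) ℂ) k, (Δ * (X ⊗ₖ PB k)).trace = 0 := by
      intro X k
      have h1 := step1 X k
      rw [Matrix.add_kronecker, Matrix.smul_kronecker, Matrix.mul_add, Matrix.trace_add,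
        Matrix.mul_smul, Matrix.trace_smul, step2 k, smul_zero, add_zero] at h1
      exact h1
    have step4 : ∀ (X : Matrix (Fin DA) (Fin DA) ℂ) (Y : Matrix (Fin DB) (Fin DB) ℂ),
        (Δ * (X ⊗ₖ (Y + Y.trace • 1))).trace = 0 := by
      intro X Y
      rw [← keyB Y, smul_sum_kron_right]
      exact trace_mul_smul_sum_zero Δ cB _ _ (fun k => step3 X k)
    have step5 : ∀ (X : Matrix (Fin DA) (Fin DA) ℂ),
        (Δ * (X ⊗ₖ (1 : Matrix (Fin DB) (Fin DB) ℂ))).trace = 0 := by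
      intro X
      have h1 := step4 X 1
      have h2 : ((1 : Matrix (Fin DB) (Fin DB) ℂ) + (1 : Matrix (Fin DB) (Fin DB) ℂ).trace • 1)
          = (1 + (DB : ℂ)) • 1 := by
        rw [Matrix.trace_one]
        simp [add_smul]
      rw [h2, Matrix.kronecker_smul, Matrix.mul_smul, Matrix.trace_smul, smul_eq_mul] at h1
      have h3 : (1 + (DB : ℂ)) ≠ 0 := by
        rw [add_comm]; exact hDB1
      exact (mul_eq_zero.mp h1).resolve_left h3
    have step6 : ∀ (X : Matrix (Fin DA) (Fin DA) ℂ) (Y : Matrix (Fin DB) (Fin DB) ℂ),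
        (Δ * (X ⊗ₖ Y)).trace = 0 := by
      intro X Y
      have h1 := step4 X Y
      rw [Matrix.kronecker_add, Matrix.kronecker_smul, Matrix.mul_add, Matrix.trace_add,
        Matrix.mul_smul, Matrix.trace_smul, step5 X, smul_zero, add_zero] at h1
      exact h1
    have hΔ0 : Δ = 0 := by
      ext ⟨p, q⟩ ⟨r, s⟩
      have h1 := step6 (Matrix.single r p 1) (Matrix.single s q 1)
      rw [kron_stdBasis, trace_mul_std] at h1
      simpa using h1
    have := sub_eq_zero.mp hΔ0
    exact this
  · -- tightness fails
    intro H
    haveI : NeZero DA := ⟨by omega⟩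
    haveI : NeZero DB := ⟨by omega⟩
    set a0 : Fin DA := ⟨0, by omega⟩ with ha0
    set b0 : Fin DB := ⟨0, by omega⟩ with hb0
    set sA : Fin DA → ℂ := Pi.single a0 1 with hsA
    set sB : Fin DB → ℂ := Pi.single b0 1 with hsB
    set w : Fin DA × Fin DB → ℂ := fun p => sA p.1 * sB p.2 with hw
    have hkron : proj w = proj sA ⊗ₖ proj sB := by
      ext ⟨i1, i2⟩ ⟨j1, j2⟩
      simp only [proj, Matrix.of_apply, Matrix.kroneckerMap_apply, hw, star_mul']
      ring
    have hiA : inner' sA sA = 1 := by rw [hsA, inner'_single]; simp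
    have hiB : inner' sB sB = 1 := by rw [hsB, inner'_single]; simp
    have hww : inner' w w = 1 := by
      have h1 : inner' w w = (∑ a, star (sA a) * sA a) * (∑ b, star (sB b) * sB b) := by
        rw [inner', Fintype.sum_prod_type, Finset.sum_mul_sum]
        apply Finset.sum_congr rfl
        intro a _
        apply Finset.sum_congr rfl
        intro b _
        simp only [hw, star_mul']
        ring
      rw [h1]
      have := hiA
      have := hiB
      simp only [inner'] at this ⊢
      rw [show (∑ a, star (sA a) * sA a) = inner' sA sA from rfl,
        show (∑ b, star (sB b) * sB b) = inner' sB sB from rfl, hiA, hiB, one_mul]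
    have hdw : IsDensity (proj w) := ⟨proj_posSemidef w, by rw [trace_proj, hww]⟩
    have hdA : IsDensity (proj sA) := ⟨proj_posSemidef sA, by rw [trace_proj, hiA]⟩
    have hdB : IsDensity (proj sB) := ⟨proj_posSemidef sB, by rw [trace_proj, hiB]⟩
    have Heq := H (proj w) hdw
    -- rewrite the double sum
    have hsum : (∑ j, ∑ k, ((proj w) * (PA j ⊗ₖ PB k)).trace • (PA j ⊗ₖ PB k))
        = (∑ j, ((proj sA) * PA j).trace • PA j) ⊗ₖ (∑ k, ((proj sB) * PB k).trace • PB k) := by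
      rw [sum_kron_left]
      apply Finset.sum_congr rfl
      intro j _
      rw [Matrix.smul_kronecker, sum_kron_right, Finset.smul_sum]
      apply Finset.sum_congr rfl
      intro k _
      rw [Matrix.kronecker_smul, smul_smul, hkron, ← Matrix.mul_kronecker_mul,
        Matrix.trace_kronecker]
    have hSA : (∑ j, ((proj sA) * PA j).trace • PA j) = cA⁻¹ • (proj sA + 1) := by
      have h1 := hA' (proj sA) hdA
      rw [← h1, smul_smul, inv_mul_cancel₀ hcA0, one_smul]
    have hSB : (∑ k, ((proj sB) * PB k).trace • PB k) = cB⁻¹ • (proj sB + 1) := by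
      have h1 := hB' (proj sB) hdB
      rw [← h1, smul_smul, inv_mul_cancel₀ hcB0, one_smul]
    rw [hsum, hSA, hSB] at Heq
    set c' : ℂ := ((mA : ℂ) * (mB : ℂ) * ((DA : ℂ) * (DB : ℂ) + 1))/((DA : ℂ) * (DB : ℂ))
      with hc'
    have h00 := Matrix.ext_iff.mpr Heq (a0, b0) (a0, b0)
    have hL : (proj w) (a0, b0) (a0, b0) = 1 := by
      simp [proj, hw, hsA, hsB, Pi.single_apply]
    have hR2A : (proj sA + 1) a0 a0 = 2 := by
      simp [proj, hsA, Pi.single_apply, Matrix.one_apply_eq]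
      norm_num
    have hR2B : (proj sB + 1) b0 b0 = 2 := by
      simp [proj, hsB, Pi.single_apply, Matrix.one_apply_eq]
      norm_num
    rw [hL] at h00
    rw [Matrix.sub_apply, Matrix.smul_apply, Matrix.kroneckerMap_apply, Matrix.smul_apply,
      Matrix.smul_apply, hR2A, hR2B, Matrix.one_apply_eq] at h00
    -- now h00 : 1 = c' • (cA⁻¹ • 2 * cB⁻¹ • 2) - 1
    have h2 : (1 : ℂ) = c' * (cA⁻¹ * 2 * (cB⁻¹ * 2)) - 1 := by
      simpa [smul_eq_mul] using h00
    rw [hc', hcA, hcB] at h2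
    field_simp at h2
    have h02 : ((DA:ℂ)*(DB:ℂ)) * (2 * ((mA:ℂ) * ((DA:ℂ)+1)) * ((mB:ℂ) * ((DB:ℂ)+1)))
        = ((DA:ℂ)*(DB:ℂ)) * (4 * ((mA:ℂ) * (mB:ℂ) * ((DA:ℂ)*(DB:ℂ)+1))) := by
      linear_combination ((DA:ℂ)*(DB:ℂ)*(mA:ℂ)*(mB:ℂ)) * h2
    have h03 : DA*DB*(2 * (mA * (DA+1)) * (mB * (DB+1)))
        = DA*DB*(4 * (mA * mB * (DA*DB+1))) := by
      exact_mod_cast h02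
    have h03' : 2 * (mA * (DA+1)) * (mB * (DB+1)) = 4 * (mA * mB * (DA*DB+1)) :=
      Nat.eq_of_mul_eq_mul_left (Nat.mul_pos (by omega) (by omega)) h03
    have h04 : mA * mB * (2 * (DA+1) * (DB+1)) = mA * mB * (4 * (DA*DB+1)) := by
      ring_nf; ring_nf at h03'; linarith
    have h05 : 2 * (DA+1) * (DB+1) = 4 * (DA*DB+1) :=
      Nat.eq_of_mul_eq_mul_left (Nat.mul_pos hmA hmB) h04
    nlinarith [h05, Nat.mul_le_mul (le_refl DA) hDB, Nat.mul_le_mul hDA (le_refl DB)]
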